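/- Let r ≥ 2 be an integer and suppose q = r² and a = 2r (so a = 2√q). Then for every positive integer X, M(X) = r^X − (r − 1)·r^{X−1}·X; equivalently, M(X)/q^{X/2} = −(1 − 1/√q)·X + 1. -/
import Mathlib


open Real Filter

/-- The coefficient sequence `c_N` with `c_0 = 1`, `c_1 = a - q - 1`,
`c_2 = a*c_1 - q*c_0 + q`, and `c_N = a*c_{N-1} - q*c_{N-2}` for `N ≥ 3`;
these are the Taylor coefficients at `u = 0` of `(1-u)(1-qu)/(1-au+qu²)`,
the reciprocal of the zeta function of an elliptic curve over `F_q` with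
Frobenius trace `a`. -/
def mertC (q a : ℤ) : ℕ → ℤ
  | 0 => 1
  | 1 => a - q - 1
  | 2 => a * (a - q - 1) - q * 1 + q
  | (N + 3) => a * mertC q a (N + 2) - q * mertC q a (N + 1)

/-- `M(X) = ∑_{N=0}^{X-1} c_N`, the Mertens summatory function of the
Möbius function of an elliptic curve over `F_q` with Frobenius trace `a`. -/
def mertM (q a : ℤ) (X : ℕ) : ℤ := ∑ N ∈ Finset.range X, mertC q a N

lemma mertC_closed (r : ℤ) :
    ∀ N : ℕ, mertC (r ^ 2) (2 * r) (N + 1) = -(r - 1) ^ 2 * (N + 1) * r ^ N := by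
  have key : ∀ N : ℕ,
      mertC (r ^ 2) (2 * r) (N + 1) = -(r - 1) ^ 2 * (N + 1) * r ^ N ∧
      mertC (r ^ 2) (2 * r) (N + 2) = -(r - 1) ^ 2 * (N + 2) * r ^ (N + 1) := by
    intro N
    induction N with
    | zero =>
      constructor
      · show (2 * r - r ^ 2 - 1) = _
        push_cast; ring
      · show 2 * r * (2 * r - r ^ 2 - 1) - r ^ 2 * 1 + r ^ 2 = _
        push_cast; ring
    | succ n ih =>
      refine ⟨ih.2, ?_⟩
      show mertC (r ^ 2) (2 * r) (n + 3) = _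
      rw [mertC, ih.1, ih.2]
      push_cast; ring
  exact fun N => (key N).1

lemma mertM_closed (r : ℤ) :
    ∀ Y : ℕ, mertM (r ^ 2) (2 * r) (Y + 1)
      = r ^ (Y + 1) - (r - 1) * r ^ Y * ((Y : ℤ) + 1) := by
  intro Y
  induction Y with
  | zero =>
    show mertC (r ^ 2) (2 * r) 0 = _
    simp [mertC]
  | succ n ih =>
    have : mertM (r ^ 2) (2 * r) (n + 2)
        = mertM (r ^ 2) (2 * r) (n + 1) + mertC (r ^ 2) (2 * r) (n + 1) := by
      simp [mertM, Finset.sum_range_succ]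
    rw [this, ih, mertC_closed]
    push_cast; ring

theorem mertens_formula_double_zero_plus (r : ℤ) (hr : 2 ≤ r) (q a : ℤ)
    (hq : q = r ^ 2) (ha : a = 2 * r) :
    ∀ X : ℕ, 1 ≤ X →
      mertM q a X = r ^ X - (r - 1) * r ^ (X - 1) * (X : ℤ) ∧
      (mertM q a X : ℝ) / (q : ℝ) ^ ((X : ℝ) / 2) =
        -(1 - 1 / Real.sqrt (q : ℝ)) * (X : ℝ) + 1 := by
  subst hq ha
  intro X hX
  obtain ⟨Y, rfl⟩ : ∃ Y, X = Y + 1 := ⟨X - 1, (Nat.succ_pred_eq_of_pos hX).symm⟩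
  have hM := mertM_closed r Y
  have h1 : mertM (r ^ 2) (2 * r) (Y + 1)
      = r ^ (Y + 1) - (r - 1) * r ^ (Y + 1 - 1) * ((Y + 1 : ℕ) : ℤ) := by
    rw [hM]; push_cast; ring
  refine ⟨h1, ?_⟩
  have hrR : (2 : ℝ) ≤ (r : ℝ) := by exact_mod_cast hr
  have hrpos : (0 : ℝ) < (r : ℝ) := by linarith
  have hq1 : ((r ^ 2 : ℤ) : ℝ) = (r : ℝ) ^ 2 := by push_cast; ring
  have hsqrt : Real.sqrt ((r ^ 2 : ℤ) : ℝ) = (r : ℝ) := by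
    rw [hq1, Real.sqrt_sq hrpos.le]
  have hpow : ((r ^ 2 : ℤ) : ℝ) ^ (((Y + 1 : ℕ) : ℝ) / 2) = (r : ℝ) ^ (Y + 1) := by
    rw [hq1, ← Real.rpow_natCast (r : ℝ) 2, ← Real.rpow_mul hrpos.le,
      ← Real.rpow_natCast (r : ℝ) (Y + 1)]
    push_cast
    congr 1
    ring
  rw [hM, hpow, hsqrt]
  have hrne : (r : ℝ) ≠ 0 := ne_of_gt hrpos
  have hpne : (r : ℝ) ^ (Y + 1) ≠ 0 := pow_ne_zero _ hrne
  push_cast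
  field_simp
  ring
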